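/- Let P, Q, L be real n×n matrices with P = Pᵀ, Q = Qᵀ and L invertible, let S_W = [[L⁻¹Q, L⁻¹],[P·L⁻¹·Q − Lᵀ, P·L⁻¹]], and set W_xx = P + Q − L − Lᵀ. Then the kernel of S_W − I and the kernel of W_xx have the same dimension (as real vector spaces). -/

import Mathlib

open Matrix

/-- The free symplectic matrix `S_W = [[L⁻¹Q, L⁻¹],[P L⁻¹ Q - Lᵀ, P L⁻¹]]`. -/
noncomputable def freeSymplectic {n : ℕ} (P L Q : Matrix (Fin n) (Fin n) ℝ) :
    Matrix (Fin n ⊕ Fin n) (Fin n ⊕ Fin n) ℝ :=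
  Matrix.fromBlocks (L⁻¹ * Q) L⁻¹ (P * L⁻¹ * Q - Lᵀ) (P * L⁻¹)

lemma key {n : ℕ} (P L Q : Matrix (Fin n) (Fin n) ℝ) (hL : L.det ≠ 0)
    (x : Fin n → ℝ) :
    (freeSymplectic P L Q - 1) *ᵥ (Sum.elim x ((L - Q) *ᵥ x))
      = Sum.elim (0 : Fin n → ℝ) ((P + Q - L - Lᵀ) *ᵥ x) := by
  have hu : IsUnit L.det := isUnit_iff_ne_zero.mpr hL
  have h1 : L⁻¹ * L = 1 := nonsing_inv_mul L hu
  have hA : L⁻¹ * Q + L⁻¹ * (L - Q) = 1 := by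
    rw [mul_sub, h1]; abel
  have hB : (P * L⁻¹ * Q - Lᵀ) + (P * L⁻¹) * (L - Q) - (L - Q) = P + Q - L - Lᵀ := by
    rw [mul_sub, mul_assoc P L⁻¹ L, h1, mul_one]; abel
  funext i
  cases i with
  | inl i =>
      have : ((L⁻¹ * Q) *ᵥ x + L⁻¹ *ᵥ ((L - Q) *ᵥ x) - x) i = (0 : Fin n → ℝ) i := by
        rw [mulVec_mulVec, ← add_mulVec, hA, one_mulVec, sub_self]
      simpa [freeSymplectic, sub_mulVec, fromBlocks_mulVec, Matrix.sub_apply] using this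
  | inr i =>
      have : ((P * L⁻¹ * Q - Lᵀ) *ᵥ x + (P * L⁻¹) *ᵥ ((L - Q) *ᵥ x) - (L - Q) *ᵥ x) i
          = ((P + Q - L - Lᵀ) *ᵥ x) i := by
        rw [mulVec_mulVec, ← add_mulVec, ← sub_mulVec, hB]
      simpa [freeSymplectic, sub_mulVec, fromBlocks_mulVec, Matrix.sub_apply] using this

lemma key2 {n : ℕ} (P L Q : Matrix (Fin n) (Fin n) ℝ) (hL : L.det ≠ 0)
    (v : Fin n ⊕ Fin n → ℝ) (hv : (freeSymplectic P L Q - 1) *ᵥ v = 0) :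
    v ∘ Sum.inr = (L - Q) *ᵥ (v ∘ Sum.inl) ∧
      (P + Q - L - Lᵀ) *ᵥ (v ∘ Sum.inl) = 0 := by
  have hu : IsUnit L.det := isUnit_iff_ne_zero.mpr hL
  have h1 : L * L⁻¹ = 1 := mul_nonsing_inv L hu
  set x := v ∘ Sum.inl with hx
  set p := v ∘ Sum.inr with hp
  have hvelim : Sum.elim x p = v := Sum.elim_comp_inl_inr v
  have hinl : (L⁻¹ * Q) *ᵥ x + L⁻¹ *ᵥ p - x = 0 := by
    funext i
    have := congrFun hv (Sum.inl i)
    rw [← hvelim] at this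
    simpa [freeSymplectic, sub_mulVec, fromBlocks_mulVec, Matrix.sub_apply] using this
  have h2 : Q *ᵥ x + p - L *ᵥ x = 0 := by
    have h2 : L *ᵥ ((L⁻¹ * Q) *ᵥ x + L⁻¹ *ᵥ p - x) = L *ᵥ (0 : Fin n → ℝ) := by
      rw [hinl]
    rw [mulVec_zero, mulVec_sub, mulVec_add, mulVec_mulVec, mulVec_mulVec,
      ← mul_assoc, h1, one_mul, one_mulVec] at h2
    exact h2
  have hpe : p = (L - Q) *ᵥ x := by
    funext i
    have := congrFun h2 i
    simp only [Pi.add_apply, Pi.sub_apply, Pi.zero_apply, sub_mulVec] at this ⊢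
    linarith
  refine ⟨hpe, ?_⟩
  have hk := key P L Q hL x
  rw [← hpe, hvelim, hv] at hk
  funext i
  simpa using congrFun hk.symm (Sum.inr i)

/-- The map `x ↦ (x, (L - Q)x)` as a linear map. -/
noncomputable def fwd {n : ℕ} (L Q : Matrix (Fin n) (Fin n) ℝ) :
    (Fin n → ℝ) →ₗ[ℝ] (Fin n ⊕ Fin n → ℝ) where
  toFun x := Sum.elim x ((L - Q) *ᵥ x)
  map_add' x y := by funext i; cases i <;> simp [mulVec_add]
  map_smul' c x := by funext i; cases i <;> simp [mulVec_smul]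

/-- `ker (S_W - I)` and `ker (W_xx)`, with `W_xx = P + Q - L - Lᵀ`, have the
same dimension as real vector spaces. -/
theorem ker_SW_sub_one_dim_eq_ker_Wxx {n : ℕ} (P L Q : Matrix (Fin n) (Fin n) ℝ)
    (hP : Pᵀ = P) (hQ : Qᵀ = Q) (hL : L.det ≠ 0) :
    Module.finrank ℝ (LinearMap.ker (Matrix.toLin' (freeSymplectic P L Q - 1)))
      = Module.finrank ℝ (LinearMap.ker (Matrix.toLin' (P + Q - L - Lᵀ))) := by
  have hf : ∀ x ∈ LinearMap.ker (Matrix.toLin' (P + Q - L - Lᵀ)),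
      fwd L Q x ∈ LinearMap.ker (Matrix.toLin' (freeSymplectic P L Q - 1)) := by
    intro x hx
    rw [LinearMap.mem_ker, toLin'_apply] at hx ⊢
    show (freeSymplectic P L Q - 1) *ᵥ (Sum.elim x ((L - Q) *ᵥ x)) = 0
    rw [key P L Q hL, hx]
    funext i; cases i <;> rfl
  have hg : ∀ v ∈ LinearMap.ker (Matrix.toLin' (freeSymplectic P L Q - 1)),
      LinearMap.funLeft ℝ ℝ Sum.inl v ∈ LinearMap.ker (Matrix.toLin' (P + Q - L - Lᵀ)) := by
    intro v hv
    rw [LinearMap.mem_ker, toLin'_apply] at hv ⊢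
    exact (key2 P L Q hL v hv).2
  set f := (fwd L Q).restrict hf with hfdef
  set g := (LinearMap.funLeft ℝ ℝ Sum.inl).restrict hg with hgdef
  have hgf : g.comp f = LinearMap.id := by
    ext x
    simp [hfdef, hgdef, LinearMap.restrict_apply, fwd, LinearMap.funLeft]
  have hfg : f.comp g = LinearMap.id := by
    ext v i
    have hv : (freeSymplectic P L Q - 1) *ᵥ (v : Fin n ⊕ Fin n → ℝ) = 0 := by
      have := v.2; rwa [LinearMap.mem_ker, toLin'_apply] at this
    have h := (key2 P L Q hL v hv).1
    simp only [LinearMap.coe_comp, Function.comp_apply, LinearMap.id_coe, id_eq,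
      hfdef, hgdef, LinearMap.restrict_apply]
    show (Sum.elim ((v : Fin n ⊕ Fin n → ℝ) ∘ Sum.inl)
        ((L - Q) *ᵥ ((v : Fin n ⊕ Fin n → ℝ) ∘ Sum.inl))) i = (v : Fin n ⊕ Fin n → ℝ) i
    cases i with
    | inl i => rfl
    | inr i => exact (congrFun h i).symm
  exact (LinearEquiv.ofLinear f g hfg hgf).symm.finrank_eq
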